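/- For each 1 ≤ j ≤ d and every n ≥ 0: E[Y_j − π1] = θ·x_n and E[(Y_j − π1)²] = θ·z_n + π1·(1−θ)·x_n. -/

import Mathlib

open Finset Filter
set_option maxHeartbeats 1000000

namespace AsymIsing

/-- Level-`k` vertices of the rooted `d`-ary tree: paths of length `k` from the root. -/
abbrev Vert (d k : ℕ) : Type := Fin k → Fin d

/-- A spin configuration on levels `0, …, n` of the `d`-ary tree. -/
abbrev Conf (d n : ℕ) : Type := ∀ k : Fin (n + 1), Vert d k → Fin 2

/-- A spin configuration on level `n` only. -/
abbrev LConf (d n : ℕ) : Type := Vert d n → Fin 2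

/-- The transition matrix of the asymmetric binary channel; the paper's state `1`
corresponds to the index `0` and the state `2` to the index `1`. -/
noncomputable def Mmat (θ Δ : ℝ) : Fin 2 → Fin 2 → ℝ := fun i j =>
  if i = 0 then (if j = 0 then (1 + θ - Δ) / 2 else (1 - θ + Δ) / 2)
  else (if j = 0 then (1 - θ - Δ) / 2 else (1 + θ + Δ) / 2)

/-- The stationary distribution `π = (π₁, π₂)` of the channel. -/
noncomputable def pst (θ Δ : ℝ) : Fin 2 → ℝ := fun i =>
  if i = 0 then 1 / 2 - Δ / (2 * (1 - θ)) else 1 / 2 + Δ / (2 * (1 - θ))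

/-- The root spin of a configuration. -/
def root {d n : ℕ} (σ : Conf d n) : Fin 2 := σ ⟨0, n.succ_pos⟩ (fun i => i.elim0)

/-- The restriction of a configuration to the last (`n`-th) level. -/
def top {d n : ℕ} (σ : Conf d n) : LConf d n := σ (Fin.last n)

/-- The probability of a full configuration on levels `0, …, n` under the broadcast
process: the root is drawn from `π` and spins propagate along edges via `M`. -/
noncomputable def confProb (d : ℕ) (θ Δ : ℝ) (n : ℕ) (σ : Conf d n) : ℝ :=
  pst θ Δ (root σ) *
    ∏ k : Fin n, ∏ v : Vert d (k + 1),
      Mmat θ Δ (σ k.castSucc (v ∘ Fin.castSucc)) (σ k.succ v)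

/-- `P(σ(n) = A)`: the marginal law of the level-`n` spins. -/
noncomputable def levelProb (d : ℕ) (θ Δ : ℝ) (n : ℕ) (A : LConf d n) : ℝ :=
  ∑ σ : Conf d n, if top σ = A then confProb d θ Δ n σ else 0

/-- `P(σ_ρ = i, σ(n) = A)`. -/
noncomputable def jointProb (d : ℕ) (θ Δ : ℝ) (n : ℕ) (i : Fin 2) (A : LConf d n) : ℝ :=
  ∑ σ : Conf d n, if root σ = i ∧ top σ = A then confProb d θ Δ n σ else 0

/-- The posterior `f_n(i, A) = P(σ_ρ = i ∣ σ(n) = A)`. -/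
noncomputable def post (d : ℕ) (θ Δ : ℝ) (n : ℕ) (i : Fin 2) (A : LConf d n) : ℝ :=
  jointProb d θ Δ n i A / levelProb d θ Δ n A

/-- The law of `σ^i(n)`, i.e. `P(σ(n) = A ∣ σ_ρ = i)`. -/
noncomputable def condLevel (d : ℕ) (θ Δ : ℝ) (n : ℕ) (i : Fin 2) (A : LConf d n) : ℝ :=
  jointProb d θ Δ n i A / pst θ Δ i

/-- The total variation distance between `σ^1(n)` and `σ^2(n)`. -/
noncomputable def tvDist (d : ℕ) (θ Δ : ℝ) (n : ℕ) : ℝ :=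
  (1 / 2) * ∑ A : LConf d n, |condLevel d θ Δ n 0 A - condLevel d θ Δ n 1 A|

/-- The reconstruction problem is solvable if `limsup_n d_TV(σ^1(n), σ^2(n)) > 0`. -/
def solvable (d : ℕ) (θ Δ : ℝ) : Prop :=
  0 < Filter.limsup (fun n => tvDist d θ Δ n) Filter.atTop

/-- Non-reconstruction: `limsup_n d_TV(σ^1(n), σ^2(n)) = 0`. -/
def nonReconstruction (d : ℕ) (θ Δ : ℝ) : Prop :=
  Filter.limsup (fun n => tvDist d θ Δ n) Filter.atTop = 0

/-- Expectation of a function of the level-`n` configuration, conditioned on `σ_ρ = 1`. -/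
noncomputable def expect1 (d : ℕ) (θ Δ : ℝ) (n : ℕ) (g : LConf d n → ℝ) : ℝ :=
  ∑ A : LConf d n, condLevel d θ Δ n 0 A * g A

/-- `x_n = E f_n(1, σ^1(n)) − π₁`. -/
noncomputable def xseq (d : ℕ) (θ Δ : ℝ) (n : ℕ) : ℝ :=
  expect1 d θ Δ n (fun A => post d θ Δ n 0 A) - pst θ Δ 0

/-- `z_n = E (f_n(1, σ^1(n)) − π₁)²`. -/
noncomputable def zseq (d : ℕ) (θ Δ : ℝ) (n : ℕ) : ℝ :=
  expect1 d θ Δ n (fun A => (post d θ Δ n 0 A - pst θ Δ 0) ^ 2)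

/-- The restriction of a level-`(n+1)` configuration to the subtree of the `j`-th
child of the root (paths starting with `j`). -/
def restrictChild {d n : ℕ} (j : Fin d) (A : LConf d (n + 1)) : LConf d n :=
  fun w => A (Fin.cons j w)

/-- `Y_j = f_n(1, σ_j(n+1))`, as a function of the level-`(n+1)` configuration. -/
noncomputable def Yfun (d : ℕ) (θ Δ : ℝ) (n : ℕ) (j : Fin d) (A : LConf d (n + 1)) : ℝ :=
  post d θ Δ n 0 (restrictChild j A)

/-- `Z₁ = ∏_j (1 + (θ/π₁)(Y_j − π₁))`, as a function of the level-`(n+1)` configuration. -/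
noncomputable def Z1fun (d : ℕ) (θ Δ : ℝ) (n : ℕ) (A : LConf d (n + 1)) : ℝ :=
  ∏ j : Fin d, (1 + (θ / pst θ Δ 0) * (Yfun d θ Δ n j A - pst θ Δ 0))

/-- `Z₂ = ∏_j (1 − (θ/π₂)(Y_j − π₁))`, as a function of the level-`(n+1)` configuration. -/
noncomputable def Z2fun (d : ℕ) (θ Δ : ℝ) (n : ℕ) (A : LConf d (n + 1)) : ℝ :=
  ∏ j : Fin d, (1 - (θ / pst θ Δ 1) * (Yfun d θ Δ n j A - pst θ Δ 0))

/-- The value of `Δ` making `π = (π₁, π₂)` the stationary distribution of the channel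
with second eigenvalue `θ`, namely `Δ = (1 − θ)(π₂ − π₁)`. -/
noncomputable def Dlt (θ π1 π2 : ℝ) : ℝ := (1 - θ) * (π2 - π1)

/-- The Gaussian-approximation function
`f(s) = E[π₁ e^{sμ₁+√s W₁} / (π₁ e^{sμ₁+√s W₁} + π₂ e^{sμ₂+√s W₂})] − π₁`,
where `μ₁ = 1/(2π₁)`, `μ₂ = −(1+π₂)/(2π₂²)`, `W₁ ∼ N(0, 1/π₁)` (realized as `w/√π₁`
for `w` standard Gaussian) and `W₂ = −(π₁/π₂)·W₁`. -/
noncomputable def gfun (π1 π2 : ℝ) (s : ℝ) : ℝ :=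
  (∫ w : ℝ,
      (π1 * Real.exp (s * (1 / (2 * π1)) + Real.sqrt s * (w / Real.sqrt π1))) /
        (π1 * Real.exp (s * (1 / (2 * π1)) + Real.sqrt s * (w / Real.sqrt π1)) +
          π2 * Real.exp (s * (-(1 + π2) / (2 * π2 ^ 2)) +
            Real.sqrt s * (-(π1 / π2) * (w / Real.sqrt π1))))
    ∂(ProbabilityTheory.gaussianReal 0 1)) - π1

/-! ### Auxiliary development for `Yfun_moments` -/

section Aux

variable {d : ℕ} (θ Δ : ℝ)

/-- The product-of-transition-matrices part of `confProb`. -/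
noncomputable def treeP (n : ℕ) (σ : Conf d n) : ℝ :=
  ∏ k : Fin n, ∏ v : Vert d (k + 1),
    Mmat θ Δ (σ k.castSucc (v ∘ Fin.castSucc)) (σ k.succ v)

lemma confProb_eq_treeP (n : ℕ) (σ : Conf d n) :
    confProb d θ Δ n σ = pst θ Δ (root σ) * treeP θ Δ n σ := rfl

variable {n : ℕ}

/-- The configuration of the subtree of the `j`-th child of the root. -/
def child (j : Fin d) (σ : Conf d (n + 1)) : Conf d n :=
  fun k w => σ k.succ (Fin.cons j w)

/-- Glue a root state and `d` subtree configurations into one configuration. -/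
def glue (i : Fin 2) (τ : Fin d → Conf d n) : Conf d (n + 1) :=
  fun k => Fin.cases (motive := fun k => Vert d k → Fin 2) (fun _ => i)
    (fun k' (v : Fin (k' + 1) → Fin d) => τ (v 0) k' (Fin.tail v)) k

lemma root_glue (i : Fin 2) (τ : Fin d → Conf d n) : root (glue i τ) = i := rfl

lemma child_glue (j : Fin d) (i : Fin 2) (τ : Fin d → Conf d n) :
    child j (glue i τ) = τ j := rfl

lemma glue_root_child (σ : Conf d (n + 1)) :
    glue (root σ) (fun j => child j σ) = σ := by
  funext k
  induction k using Fin.cases with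
  | zero =>
    funext v
    show root σ = σ 0 v
    exact congrArg (σ 0) (funext fun i => absurd i.isLt (Nat.not_lt_zero _))
  | succ k' =>
    funext v
    exact congrArg (σ k'.succ)
      (Fin.cons_self_tail (α := fun _ => Fin d) (v : Fin (k' + 1) → Fin d))

/-- Decomposition of a configuration into root state and `d` subtree configurations. -/
def confEquiv (d n : ℕ) : Conf d (n + 1) ≃ Fin 2 × (Fin d → Conf d n) where
  toFun σ := (root σ, fun j => child j σ)
  invFun p := glue p.1 p.2
  left_inv σ := glue_root_child σ
  right_inv p := by
    obtain ⟨i, τ⟩ := p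
    show (root (glue i τ), fun j => child j (glue i τ)) = (i, τ)
    rw [root_glue]
    exact congrArg _ (funext fun j => child_glue j i τ)

lemma top_child (j : Fin d) (σ : Conf d (n + 1)) :
    top (child j σ) = restrictChild j (top σ) := rfl

lemma cons_comp_castSucc {m : ℕ} (j : Fin d) (w : Fin (m + 1) → Fin d) :
    (Fin.cons j w : Fin (m + 2) → Fin d) ∘ Fin.castSucc
      = Fin.cons j (w ∘ Fin.castSucc) := by
  funext i
  induction i using Fin.cases with
  | zero => rfl
  | succ i' =>
    show (Fin.cons j w : Fin (m + 2) → Fin d) (Fin.castSucc i'.succ) = w (Fin.castSucc i')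
    rw [← Fin.succ_castSucc, Fin.cons_succ]

lemma prod_vert_succ {m : ℕ} (g : (Fin (m + 1) → Fin d) → ℝ) :
    ∏ v : Fin (m + 1) → Fin d, g v
      = ∏ j : Fin d, ∏ w : Fin m → Fin d, g (Fin.cons j w) := by
  rw [← Fintype.prod_equiv (Fin.consEquiv fun _ => Fin d)
    (fun p => g (Fin.cons p.1 p.2)) g (fun p => rfl)]
  exact Fintype.prod_prod_type _

/-- Key factorization of the tree product over the `d` child subtrees. -/
lemma treeP_succ (σ : Conf d (n + 1)) :
    treeP θ Δ (n + 1) σ =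
      ∏ j : Fin d,
        (Mmat θ Δ (root σ) (root (child j σ)) * treeP θ Δ n (child j σ)) := by
  rw [treeP, Fin.prod_univ_succ, Finset.prod_mul_distrib]
  congr 1
  · -- level-0 edges
    calc ∏ v : Vert d ((0 : Fin (n + 1)) + 1),
          Mmat θ Δ (σ (Fin.castSucc 0) (v ∘ Fin.castSucc)) (σ (Fin.succ 0) v)
        = ∏ j : Fin d, ∏ _w : Fin ((0 : Fin (n+1)) : ℕ) → Fin d,
            Mmat θ Δ (σ (Fin.castSucc 0) ((fun _ => j) ∘ Fin.castSucc))
              (σ (Fin.succ 0) (fun _ => j)) := by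
          refine prod_vert_succ _ |>.trans ?_
          refine Finset.prod_congr rfl fun j _ => Finset.prod_congr rfl fun w _ => ?_
          congr 1
          · exact congrArg (σ (Fin.castSucc 0))
              (funext fun i => absurd i.isLt (Nat.not_lt_zero _))
          · exact congrArg (σ (Fin.succ 0))
              (funext fun i => by
                induction i using Fin.cases with
                | zero => rfl
                | succ i' => exact absurd i'.isLt (Nat.not_lt_zero _))
      _ = ∏ j : Fin d, Mmat θ Δ (root σ) (root (child j σ)) := by
          refine Finset.prod_congr rfl fun j _ => ?_
          rw [Finset.prod_const]
          have h1 : Fintype.card (Fin ((0 : Fin (n+1)) : ℕ) → Fin d) = 1 := by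
            simp
            exact Fintype.card_eq_one_iff.mpr ⟨fun i => i.elim0, fun f => funext fun i => i.elim0⟩
          rw [Finset.card_univ, h1, pow_one]
          congr 1
          · exact congrArg (σ (Fin.castSucc 0))
              (funext fun i => absurd i.isLt (Nat.not_lt_zero _))
          · exact congrArg (σ (Fin.succ 0))
              (funext fun i => by
                induction i using Fin.cases with
                | zero => rfl
                | succ i' => exact absurd i'.isLt (Nat.not_lt_zero _))
  · -- deeper edges
    calc ∏ k : Fin n, ∏ v : Vert d (k.succ + 1),
          Mmat θ Δ (σ k.succ.castSucc (v ∘ Fin.castSucc)) (σ k.succ.succ v)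
        = ∏ k : Fin n, ∏ j : Fin d, ∏ w : Vert d (k + 1),
            Mmat θ Δ (σ k.succ.castSucc ((Fin.cons j w) ∘ Fin.castSucc))
              (σ k.succ.succ (Fin.cons j w)) :=
          Finset.prod_congr rfl fun k _ => prod_vert_succ _
      _ = ∏ j : Fin d, ∏ k : Fin n, ∏ w : Vert d (k + 1),
            Mmat θ Δ (σ k.succ.castSucc ((Fin.cons j w) ∘ Fin.castSucc))
              (σ k.succ.succ (Fin.cons j w)) := Finset.prod_comm
      _ = ∏ j : Fin d, treeP θ Δ n (child j σ) := by
          refine Finset.prod_congr rfl fun j _ => ?_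
          refine Finset.prod_congr rfl fun k _ => Finset.prod_congr rfl fun w _ => ?_
          rw [cons_comp_castSucc]
          rfl

end Aux

section Aux2

variable {d : ℕ} (θ Δ : ℝ)

lemma fin2 (x : Fin 2) : x = 0 ∨ x = 1 := by
  fin_cases x
  exacts [Or.inl rfl, Or.inr rfl]

lemma Mmat_eq00 : Mmat θ Δ 0 0 = (1 + θ - Δ) / 2 := rfl
lemma Mmat_eq01 : Mmat θ Δ 0 1 = (1 - θ + Δ) / 2 := rfl
lemma Mmat_eq10 : Mmat θ Δ 1 0 = (1 - θ - Δ) / 2 := rfl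
lemma Mmat_eq11 : Mmat θ Δ 1 1 = (1 + θ + Δ) / 2 := rfl
lemma pst_eq0 : pst θ Δ 0 = 1 / 2 - Δ / (2 * (1 - θ)) := rfl
lemma pst_eq1 : pst θ Δ 1 = 1 / 2 + Δ / (2 * (1 - θ)) := rfl

lemma Mrow (i : Fin 2) : Mmat θ Δ i 0 + Mmat θ Δ i 1 = 1 := by
  rcases fin2 i with h | h <;> subst h
  · rw [Mmat_eq00, Mmat_eq01]; ring
  · rw [Mmat_eq10, Mmat_eq11]; ring

lemma pst_sum : pst θ Δ 0 + pst θ Δ 1 = 1 := by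
  rw [pst_eq0, pst_eq1]; ring

lemma sum_ite_const {α : Type*} [Fintype α] (c : Prop) [Decidable c] (f : α → ℝ) :
    (∑ x : α, if c then f x else 0) = if c then ∑ x : α, f x else 0 := by
  split <;> simp

/-- `S n i B = Σ_{σ : root = i, top = B} treeP σ`, the joint density with the
stationary weight of the root removed. -/
noncomputable def Sfun (n : ℕ) (i : Fin 2) (B : LConf d n) : ℝ :=
  ∑ c : Conf d n, if root c = i ∧ top c = B then treeP θ Δ n c else 0

lemma joint_eq_S (n : ℕ) (i : Fin 2) (B : LConf d n) :
    jointProb d θ Δ n i B = pst θ Δ i * Sfun θ Δ n i B := by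
  rw [jointProb, Sfun, Finset.mul_sum]
  refine Finset.sum_congr rfl fun c _ => ?_
  by_cases h : root c = i ∧ top c = B
  · rw [if_pos h, if_pos h, confProb_eq_treeP, h.1]
  · rw [if_neg h, if_neg h, mul_zero]

lemma confEquiv_symm_apply (n : ℕ) (p : Fin 2 × (Fin d → Conf d n)) :
    (confEquiv d n).symm p = glue p.1 p.2 := rfl

/-- A configuration on level `0` alone is just a root spin. -/
def conf0Equiv : Conf d 0 ≃ Fin 2 where
  toFun := root
  invFun := fun i _ _ => i
  left_inv := fun σ => funext fun k => funext fun v => by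
    have hk : k = ⟨0, Nat.one_pos⟩ := Fin.ext (Nat.lt_one_iff.mp k.isLt)
    subst hk
    exact congrArg (σ ⟨0, Nat.one_pos⟩)
      (funext fun i => absurd i.isLt (Nat.not_lt_zero _))
  right_inv := fun i => rfl

lemma sum_root_treeP (n : ℕ) (i : Fin 2) :
    ∑ σ : Conf d n, (if root σ = i then treeP θ Δ n σ else 0) = 1 := by
  induction n generalizing i with
  | zero =>
    rw [Fintype.sum_equiv (conf0Equiv (d := d)) _ (fun x => if x = i then (1 : ℝ) else 0)
      (fun σ => by
        have ht : treeP θ Δ 0 σ = 1 := by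
          rw [treeP]
          exact Finset.prod_of_isEmpty _
        rw [ht]
        rfl)]
    rw [Finset.sum_ite_eq' Finset.univ i (fun _ => (1 : ℝ))]
    simp
  | succ n ih =>
    rw [← Equiv.sum_comp (confEquiv d n).symm
      (fun σ => if root σ = i then treeP θ Δ (n + 1) σ else 0), Fintype.sum_prod_type]
    simp only [confEquiv_symm_apply, root_glue]
    have hT : ∀ (i' : Fin 2) (τ : Fin d → Conf d n),
        treeP θ Δ (n + 1) (glue i' τ)
          = ∏ j, (Mmat θ Δ i' (root (τ j)) * treeP θ Δ n (τ j)) := by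
      intro i' τ
      rw [treeP_succ]
      simp only [root_glue, child_glue]
    calc ∑ i' : Fin 2, ∑ τ : Fin d → Conf d n,
          (if i' = i then treeP θ Δ (n + 1) (glue i' τ) else 0)
        = ∑ i' : Fin 2, (if i' = i then
            ∑ τ : Fin d → Conf d n, treeP θ Δ (n + 1) (glue i' τ) else 0) := by
          exact Finset.sum_congr rfl fun i' _ => sum_ite_const _ _
      _ = ∑ τ : Fin d → Conf d n, treeP θ Δ (n + 1) (glue i τ) := by
          rw [Finset.sum_ite_eq' Finset.univ i]; simp
      _ = ∑ τ : Fin d → Conf d n, ∏ j, (Mmat θ Δ i (root (τ j)) * treeP θ Δ n (τ j)) :=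
          Finset.sum_congr rfl fun τ _ => hT i τ
      _ = ∏ j : Fin d, ∑ c : Conf d n, (Mmat θ Δ i (root c) * treeP θ Δ n c) :=
          (Fintype.prod_sum (κ := fun _ : Fin d => Conf d n)
            (fun _ c => Mmat θ Δ i (root c) * treeP θ Δ n c)).symm
      _ = 1 := by
          have hin : ∑ c : Conf d n, (Mmat θ Δ i (root c) * treeP θ Δ n c) = 1 := by
            calc ∑ c : Conf d n, (Mmat θ Δ i (root c) * treeP θ Δ n c)
                = ∑ c : Conf d n, ∑ i' : Fin 2,
                    (if root c = i' then Mmat θ Δ i i' * treeP θ Δ n c else 0) := by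
                  refine Finset.sum_congr rfl fun c _ => ?_
                  rw [Finset.sum_ite_eq Finset.univ (root c)
                    (fun i' => Mmat θ Δ i i' * treeP θ Δ n c)]
                  simp
              _ = ∑ i' : Fin 2, ∑ c : Conf d n,
                    (if root c = i' then Mmat θ Δ i i' * treeP θ Δ n c else 0) :=
                  Finset.sum_comm
              _ = ∑ i' : Fin 2, Mmat θ Δ i i'
                    * ∑ c : Conf d n, (if root c = i' then treeP θ Δ n c else 0) := by
                  refine Finset.sum_congr rfl fun i' _ => ?_
                  rw [Finset.mul_sum]
                  refine Finset.sum_congr rfl fun c _ => ?_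
                  split <;> simp
              _ = ∑ i' : Fin 2, Mmat θ Δ i i' := by
                  refine Finset.sum_congr rfl fun i' _ => ?_
                  rw [ih i', mul_one]
              _ = 1 := by rw [Fin.sum_univ_two, Mrow]
          rw [Finset.prod_congr rfl fun j (_ : j ∈ Finset.univ) => hin,
            Finset.prod_const_one]

lemma top_glue_iff {n : ℕ} (i' : Fin 2) (τ : Fin d → Conf d n) (A : LConf d (n + 1)) :
    top (glue i' τ) = A ↔ ∀ j, top (τ j) = restrictChild j A := by
  constructor
  · rintro rfl j
    rfl
  · intro h
    funext v
    calc top (glue i' τ) v = top (τ (v 0)) (Fin.tail v) := by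
          conv_lhs => rw [← Fin.cons_self_tail v]
          rfl
      _ = restrictChild (v 0) A (Fin.tail v) := congrFun (h (v 0)) (Fin.tail v)
      _ = A v := congrArg A (Fin.cons_self_tail v)

lemma prod_ite_forall (p : Fin d → Prop) [DecidablePred p] (f : Fin d → ℝ) :
    ∏ j, (if p j then f j else 0) = if (∀ j, p j) then ∏ j, f j else 0 := by
  by_cases h : ∀ j, p j
  · rw [if_pos h]
    exact Finset.prod_congr rfl fun j _ => if_pos (h j)
  · rw [if_neg h]
    push_neg at h
    obtain ⟨j, hj⟩ := h
    exact Finset.prod_eq_zero (Finset.mem_univ j) (if_neg hj)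

lemma S_succ {n : ℕ} (i : Fin 2) (A : LConf d (n + 1)) :
    Sfun θ Δ (n + 1) i A =
      ∏ j : Fin d,
        (Mmat θ Δ i 0 * Sfun θ Δ n 0 (restrictChild j A)
          + Mmat θ Δ i 1 * Sfun θ Δ n 1 (restrictChild j A)) := by
  have hin : ∀ B : LConf d n,
      (∑ c : Conf d n, if top c = B then Mmat θ Δ i (root c) * treeP θ Δ n c else 0)
        = Mmat θ Δ i 0 * Sfun θ Δ n 0 B + Mmat θ Δ i 1 * Sfun θ Δ n 1 B := by
    intro B
    rw [Sfun, Sfun, Finset.mul_sum, Finset.mul_sum, ← Finset.sum_add_distrib]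
    refine Finset.sum_congr rfl fun c _ => ?_
    by_cases ht : top c = B
    · rcases fin2 (root c) with h | h <;>
        simp [h, ht, (by decide : (0 : Fin 2) ≠ 1), (by decide : (1 : Fin 2) ≠ 0)]
    · simp [ht]
  have hT : ∀ (i' : Fin 2) (τ : Fin d → Conf d n),
      treeP θ Δ (n + 1) (glue i' τ)
        = ∏ j, (Mmat θ Δ i' (root (τ j)) * treeP θ Δ n (τ j)) := by
    intro i' τ
    rw [treeP_succ]
    simp only [root_glue, child_glue]
  rw [Sfun, ← Equiv.sum_comp (confEquiv d n).symm
    (fun σ => if root σ = i ∧ top σ = A then treeP θ Δ (n + 1) σ else 0),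
    Fintype.sum_prod_type]
  simp only [confEquiv_symm_apply, root_glue, top_glue_iff, ite_and]
  calc ∑ i' : Fin 2, ∑ τ : Fin d → Conf d n,
        (if i' = i then (if ∀ j, top (τ j) = restrictChild j A
          then treeP θ Δ (n + 1) (glue i' τ) else 0) else 0)
      = ∑ i' : Fin 2, (if i' = i then ∑ τ : Fin d → Conf d n,
          (if ∀ j, top (τ j) = restrictChild j A
            then treeP θ Δ (n + 1) (glue i' τ) else 0) else 0) :=
        Finset.sum_congr rfl fun i' _ => sum_ite_const _ _
    _ = ∑ τ : Fin d → Conf d n, (if ∀ j, top (τ j) = restrictChild j A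
          then treeP θ Δ (n + 1) (glue i τ) else 0) := by
        rw [Finset.sum_ite_eq' Finset.univ i]; simp
    _ = ∑ τ : Fin d → Conf d n, ∏ j : Fin d,
          (if top (τ j) = restrictChild j A
            then Mmat θ Δ i (root (τ j)) * treeP θ Δ n (τ j) else 0) := by
        refine Finset.sum_congr rfl fun τ _ => ?_
        rw [prod_ite_forall]
        by_cases h : ∀ j, top (τ j) = restrictChild j A
        · rw [if_pos h, if_pos h, hT]
        · rw [if_neg h, if_neg h]
    _ = ∏ j : Fin d, ∑ c : Conf d n,
          (if top c = restrictChild j A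
            then Mmat θ Δ i (root c) * treeP θ Δ n c else 0) :=
        (Fintype.prod_sum (κ := fun _ : Fin d => Conf d n)
          (fun j c => if top c = restrictChild j A
            then Mmat θ Δ i (root c) * treeP θ Δ n c else 0)).symm
    _ = ∏ j : Fin d,
          (Mmat θ Δ i 0 * Sfun θ Δ n 0 (restrictChild j A)
            + Mmat θ Δ i 1 * Sfun θ Δ n 1 (restrictChild j A)) :=
        Finset.prod_congr rfl fun j _ => hin _

lemma sum_S (n : ℕ) (i : Fin 2) : ∑ B : LConf d n, Sfun θ Δ n i B = 1 := by
  simp only [Sfun]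
  rw [Finset.sum_comm]
  calc ∑ c : Conf d n, ∑ B : LConf d n,
        (if root c = i ∧ top c = B then treeP θ Δ n c else 0)
      = ∑ c : Conf d n, (if root c = i then treeP θ Δ n c else 0) := by
        refine Finset.sum_congr rfl fun c _ => ?_
        simp only [ite_and]
        rw [sum_ite_const]
        by_cases h : root c = i
        · rw [if_pos h, if_pos h,
            Finset.sum_ite_eq Finset.univ (top c) (fun _ => treeP θ Δ n c)]
          simp
        · rw [if_neg h, if_neg h]
    _ = 1 := sum_root_treeP θ Δ n i

lemma sum_joint (n : ℕ) (i : Fin 2) :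
    ∑ B : LConf d n, jointProb d θ Δ n i B = pst θ Δ i := by
  simp only [joint_eq_S]
  rw [← Finset.mul_sum, sum_S, mul_one]

lemma level_eq (n : ℕ) (B : LConf d n) :
    levelProb d θ Δ n B = jointProb d θ Δ n 0 B + jointProb d θ Δ n 1 B := by
  rw [levelProb, jointProb, jointProb, ← Finset.sum_add_distrib]
  refine Finset.sum_congr rfl fun c _ => ?_
  by_cases ht : top c = B
  · rcases fin2 (root c) with h | h <;>
      simp [h, ht, (by decide : (0 : Fin 2) ≠ 1), (by decide : (1 : Fin 2) ≠ 0)]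
  · simp [ht]

end Aux2

section Aux3

variable {d : ℕ} (θ Δ : ℝ)

lemma pst_pos (hθ1 : |θ| < 1) (hM : ∀ i j, 0 < Mmat θ Δ i j) :
    ∀ i, 0 < pst θ Δ i := by
  have h1θ : 0 < 1 - θ := by
    have := (abs_lt.mp hθ1).2
    linarith
  have h10 := hM 1 0
  have h01 := hM 0 1
  rw [Mmat_eq10] at h10
  rw [Mmat_eq01] at h01
  intro i
  rcases fin2 i with h | h <;> subst h
  · rw [pst_eq0, show (1 : ℝ) / 2 - Δ / (2 * (1 - θ)) = (1 - θ - Δ) / (2 * (1 - θ)) by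
      field_simp]
    exact div_pos (by linarith) (by linarith)
  · rw [pst_eq1, show (1 : ℝ) / 2 + Δ / (2 * (1 - θ)) = (1 - θ + Δ) / (2 * (1 - θ)) by
      field_simp]
    exact div_pos (by linarith) (by linarith)

lemma treeP_pos (hM : ∀ i j, 0 < Mmat θ Δ i j) (n : ℕ) (σ : Conf d n) :
    0 < treeP θ Δ n σ :=
  Finset.prod_pos fun k _ => Finset.prod_pos fun v _ => hM _ _

lemma confProb_pos (hθ1 : |θ| < 1) (hM : ∀ i j, 0 < Mmat θ Δ i j) (n : ℕ)
    (σ : Conf d n) : 0 < confProb d θ Δ n σ := by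
  rw [confProb_eq_treeP]
  exact mul_pos (pst_pos θ Δ hθ1 hM _) (treeP_pos θ Δ hM n σ)

/-- Extend a level-`n` configuration to a full configuration (arbitrarily above). -/
def extConf (hd : 0 < d) {n : ℕ} (B : LConf d n) : Conf d n :=
  fun k v => B (fun i => if h : (i : ℕ) < (k : ℕ) then v ⟨i, h⟩ else ⟨0, hd⟩)

lemma top_extConf (hd : 0 < d) {n : ℕ} (B : LConf d n) : top (extConf hd B) = B := by
  funext v
  refine congrArg B (funext fun i => ?_)
  rw [dif_pos (show (i : ℕ) < ((Fin.last n : Fin (n + 1)) : ℕ) from i.isLt)]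
  exact congrArg v (Fin.eta i i.isLt)

lemma level_pos (hθ1 : |θ| < 1) (hM : ∀ i j, 0 < Mmat θ Δ i j) (hd : 0 < d) (n : ℕ)
    (B : LConf d n) : 0 < levelProb d θ Δ n B := by
  rw [levelProb]
  refine Finset.sum_pos' (fun c _ => ?_) ⟨extConf hd B, Finset.mem_univ _, ?_⟩
  · split
    · exact le_of_lt (confProb_pos θ Δ hθ1 hM n c)
    · exact le_refl 0
  · rw [if_pos (top_extConf hd B)]
    exact confProb_pos θ Δ hθ1 hM n _

/-- Level-`(n+1)` configurations are tuples of level-`n` configurations of the subtrees. -/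
def lconfEquiv (d n : ℕ) : LConf d (n + 1) ≃ (Fin d → LConf d n) where
  toFun A := fun j => restrictChild j A
  invFun B := fun v => B (v 0) (Fin.tail v)
  left_inv A := funext fun v => congrArg A (Fin.cons_self_tail v)
  right_inv B := rfl

lemma restrictChild_lconfEquiv_symm {n : ℕ} (j : Fin d) (B : Fin d → LConf d n) :
    restrictChild j ((lconfEquiv d n).symm B) = B j := rfl

/-- The master computation: the conditional expectation of a function of one subtree. -/
lemma expect_child (hpst : pst θ Δ 0 ≠ 0) {n : ℕ} (G : LConf d n → ℝ) (j : Fin d) :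
    expect1 d θ Δ (n + 1) (fun A => G (restrictChild j A)) =
      ∑ B : LConf d n,
        ((Mmat θ Δ 0 0 * Sfun θ Δ n 0 B + Mmat θ Δ 0 1 * Sfun θ Δ n 1 B) * G B) := by
  have hQ1 : ∑ c : LConf d n,
      (Mmat θ Δ 0 0 * Sfun θ Δ n 0 c + Mmat θ Δ 0 1 * Sfun θ Δ n 1 c) = 1 := by
    rw [Finset.sum_add_distrib, ← Finset.mul_sum, ← Finset.mul_sum, sum_S, sum_S,
      mul_one, mul_one, Mrow]
  have hcl : ∀ A : LConf d (n + 1),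
      condLevel d θ Δ (n + 1) 0 A = Sfun θ Δ (n + 1) 0 A := by
    intro A
    rw [condLevel, joint_eq_S, mul_div_cancel_left₀ _ hpst]
  rw [expect1]
  simp only [hcl, S_succ]
  rw [← Equiv.sum_comp (lconfEquiv d n).symm
    (fun A => (∏ j' : Fin d,
      (Mmat θ Δ 0 0 * Sfun θ Δ n 0 (restrictChild j' A)
        + Mmat θ Δ 0 1 * Sfun θ Δ n 1 (restrictChild j' A))) * G (restrictChild j A))]
  simp only [restrictChild_lconfEquiv_symm]
  calc ∑ B : Fin d → LConf d n,
        (∏ j' : Fin d,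
          (Mmat θ Δ 0 0 * Sfun θ Δ n 0 (B j') + Mmat θ Δ 0 1 * Sfun θ Δ n 1 (B j')))
          * G (B j)
      = ∑ B : Fin d → LConf d n, ∏ j' : Fin d,
          ((Mmat θ Δ 0 0 * Sfun θ Δ n 0 (B j') + Mmat θ Δ 0 1 * Sfun θ Δ n 1 (B j'))
            * (if j' = j then G (B j') else 1)) := by
        refine Finset.sum_congr rfl fun B _ => ?_
        rw [Finset.prod_mul_distrib,
          Finset.prod_ite_eq' Finset.univ j (fun j' => G (B j')), if_pos (Finset.mem_univ j)]
    _ = ∏ j' : Fin d, ∑ c : LConf d n,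
          ((Mmat θ Δ 0 0 * Sfun θ Δ n 0 c + Mmat θ Δ 0 1 * Sfun θ Δ n 1 c)
            * (if j' = j then G c else 1)) :=
        (Fintype.prod_sum (κ := fun _ : Fin d => LConf d n)
          (fun j' c => (Mmat θ Δ 0 0 * Sfun θ Δ n 0 c + Mmat θ Δ 0 1 * Sfun θ Δ n 1 c)
            * (if j' = j then G c else 1))).symm
    _ = ∏ j' : Fin d, (if j' = j then
          ∑ c : LConf d n,
            ((Mmat θ Δ 0 0 * Sfun θ Δ n 0 c + Mmat θ Δ 0 1 * Sfun θ Δ n 1 c) * G c)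
          else 1) := by
        refine Finset.prod_congr rfl fun j' _ => ?_
        by_cases h : j' = j
        · rw [if_pos h]
          refine Finset.sum_congr rfl fun c _ => ?_
          rw [if_pos h]
        · rw [if_neg h]
          calc ∑ c : LConf d n,
                ((Mmat θ Δ 0 0 * Sfun θ Δ n 0 c + Mmat θ Δ 0 1 * Sfun θ Δ n 1 c)
                  * (if j' = j then G c else 1))
              = ∑ c : LConf d n,
                  (Mmat θ Δ 0 0 * Sfun θ Δ n 0 c + Mmat θ Δ 0 1 * Sfun θ Δ n 1 c) := by
                refine Finset.sum_congr rfl fun c _ => ?_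
                rw [if_neg h, mul_one]
            _ = 1 := hQ1
    _ = ∑ c : LConf d n,
          ((Mmat θ Δ 0 0 * Sfun θ Δ n 0 c + Mmat θ Δ 0 1 * Sfun θ Δ n 1 c) * G c) := by
        rw [Finset.prod_ite_eq' Finset.univ j, if_pos (Finset.mem_univ j)]

end Aux3

/-- For each `1 ≤ j ≤ d` and every `n ≥ 0`,
`E[Y_j − π₁] = θ x_n` and `E[(Y_j − π₁)²] = θ z_n + π₁(1−θ) x_n`
(expectations under the conditioning `σ_ρ = 1`). -/
theorem Yfun_moments (d : ℕ) (hd : 2 ≤ d) (θ Δ : ℝ) (hθ0 : θ ≠ 0) (hθ1 : |θ| < 1)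
    (hθΔ : |θ| + |Δ| ≤ 1) (hM : ∀ i j, 0 < Mmat θ Δ i j)
    (hord : pst θ Δ 1 ≤ pst θ Δ 0) :
    ∀ (j : Fin d) (n : ℕ),
      expect1 d θ Δ (n + 1) (fun A => Yfun d θ Δ n j A - pst θ Δ 0) = θ * xseq d θ Δ n ∧
      expect1 d θ Δ (n + 1) (fun A => (Yfun d θ Δ n j A - pst θ Δ 0) ^ 2) =
        θ * zseq d θ Δ n + pst θ Δ 0 * (1 - θ) * xseq d θ Δ n := by
  intro j n
  have h1θ : 0 < 1 - θ := by
    have := (abs_lt.mp hθ1).2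
    linarith
  have hπ0 : 0 < pst θ Δ 0 := pst_pos θ Δ hθ1 hM 0
  have hπ1 : 0 < pst θ Δ 1 := pst_pos θ Δ hθ1 hM 1
  have hπ0ne : pst θ Δ 0 ≠ 0 := ne_of_gt hπ0
  have hπ1ne : pst θ Δ 1 ≠ 0 := ne_of_gt hπ1
  have hd0 : 0 < d := lt_of_lt_of_le two_pos hd
  have hLpos : ∀ B : LConf d n, 0 < levelProb d θ Δ n B := level_pos θ Δ hθ1 hM hd0 n
  have hLX : ∀ B : LConf d n,
      post d θ Δ n 0 B * levelProb d θ Δ n B = jointProb d θ Δ n 0 B :=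
    fun B => div_mul_cancel₀ _ (ne_of_gt (hLpos B))
  have hQ : ∀ B : LConf d n,
      Mmat θ Δ 0 0 * Sfun θ Δ n 0 B + Mmat θ Δ 0 1 * Sfun θ Δ n 1 B
        = (1 - θ) * levelProb d θ Δ n B
            + (θ / pst θ Δ 0) * jointProb d θ Δ n 0 B := by
    intro B
    have hS0 := joint_eq_S θ Δ n 0 B
    have hS1 := joint_eq_S θ Δ n 1 B
    have hM00 : Mmat θ Δ 0 0 = (1 - θ) * pst θ Δ 0 + θ := by
      rw [Mmat_eq00, pst_eq0]
      field_simp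
      ring
    have hM01 : Mmat θ Δ 0 1 = (1 - θ) * pst θ Δ 1 := by
      rw [Mmat_eq01, pst_eq1]
      field_simp
    rw [hM00, hM01, level_eq θ Δ n B, hS0, hS1]
    field_simp
    ring
  have hsumL : ∑ B : LConf d n, levelProb d θ Δ n B = 1 := by
    calc ∑ B : LConf d n, levelProb d θ Δ n B
        = ∑ B : LConf d n, (jointProb d θ Δ n 0 B + jointProb d θ Δ n 1 B) :=
          Finset.sum_congr rfl fun B _ => level_eq θ Δ n B
      _ = 1 := by rw [Finset.sum_add_distrib, sum_joint, sum_joint, pst_sum]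
  have hsumJ : ∑ B : LConf d n, jointProb d θ Δ n 0 B = pst θ Δ 0 := sum_joint θ Δ n 0
  have hJX : ∑ B : LConf d n, jointProb d θ Δ n 0 B * post d θ Δ n 0 B
      = pst θ Δ 0 * xseq d θ Δ n + pst θ Δ 0 ^ 2 := by
    have hx : xseq d θ Δ n
        = (∑ B : LConf d n, condLevel d θ Δ n 0 B * post d θ Δ n 0 B) - pst θ Δ 0 := rfl
    have hc : ∀ B : LConf d n,
        jointProb d θ Δ n 0 B * post d θ Δ n 0 B
          = pst θ Δ 0 * (condLevel d θ Δ n 0 B * post d θ Δ n 0 B) := by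
      intro B
      rw [condLevel]
      field_simp
    calc ∑ B : LConf d n, jointProb d θ Δ n 0 B * post d θ Δ n 0 B
        = pst θ Δ 0 * ∑ B : LConf d n, condLevel d θ Δ n 0 B * post d θ Δ n 0 B := by
          rw [Finset.mul_sum]
          exact Finset.sum_congr rfl fun B _ => hc B
      _ = pst θ Δ 0 * xseq d θ Δ n + pst θ Δ 0 ^ 2 := by
          rw [show (∑ B : LConf d n, condLevel d θ Δ n 0 B * post d θ Δ n 0 B)
              = xseq d θ Δ n + pst θ Δ 0 by rw [hx]; ring]
          ring
  have hJX2 : ∑ B : LConf d n,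
      jointProb d θ Δ n 0 B * (post d θ Δ n 0 B - pst θ Δ 0) ^ 2
        = pst θ Δ 0 * zseq d θ Δ n := by
    have hz : zseq d θ Δ n
        = ∑ B : LConf d n,
            condLevel d θ Δ n 0 B * (post d θ Δ n 0 B - pst θ Δ 0) ^ 2 := rfl
    have hc : ∀ B : LConf d n,
        jointProb d θ Δ n 0 B * (post d θ Δ n 0 B - pst θ Δ 0) ^ 2
          = pst θ Δ 0
              * (condLevel d θ Δ n 0 B * (post d θ Δ n 0 B - pst θ Δ 0) ^ 2) := by
      intro B
      rw [condLevel]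
      field_simp
    calc ∑ B : LConf d n,
          jointProb d θ Δ n 0 B * (post d θ Δ n 0 B - pst θ Δ 0) ^ 2
        = pst θ Δ 0 * ∑ B : LConf d n,
            condLevel d θ Δ n 0 B * (post d θ Δ n 0 B - pst θ Δ 0) ^ 2 := by
          rw [Finset.mul_sum]
          exact Finset.sum_congr rfl fun B _ => hc B
      _ = pst θ Δ 0 * zseq d θ Δ n := by rw [← hz]
  constructor
  · calc expect1 d θ Δ (n + 1) (fun A => Yfun d θ Δ n j A - pst θ Δ 0)
        = ∑ B : LConf d n,
            ((Mmat θ Δ 0 0 * Sfun θ Δ n 0 B + Mmat θ Δ 0 1 * Sfun θ Δ n 1 B)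
              * (post d θ Δ n 0 B - pst θ Δ 0)) :=
          expect_child θ Δ hπ0ne (fun B => post d θ Δ n 0 B - pst θ Δ 0) j
      _ = ∑ B : LConf d n,
            ((1 - θ) * jointProb d θ Δ n 0 B
              - ((1 - θ) * pst θ Δ 0) * levelProb d θ Δ n B
              + (θ / pst θ Δ 0) * (jointProb d θ Δ n 0 B * post d θ Δ n 0 B)
              - ((θ / pst θ Δ 0) * pst θ Δ 0) * jointProb d θ Δ n 0 B) := by
          refine Finset.sum_congr rfl fun B _ => ?_
          rw [hQ B]
          linear_combination (1 - θ) * hLX B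
      _ = (1 - θ) * (∑ B : LConf d n, jointProb d θ Δ n 0 B)
            - ((1 - θ) * pst θ Δ 0) * (∑ B : LConf d n, levelProb d θ Δ n B)
            + (θ / pst θ Δ 0)
              * (∑ B : LConf d n, jointProb d θ Δ n 0 B * post d θ Δ n 0 B)
            - ((θ / pst θ Δ 0) * pst θ Δ 0)
              * (∑ B : LConf d n, jointProb d θ Δ n 0 B) := by
          simp only [Finset.sum_sub_distrib, Finset.sum_add_distrib, ← Finset.mul_sum]
      _ = θ * xseq d θ Δ n := by
          rw [hsumJ, hsumL, hJX]
          field_simp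
          ring
  · calc expect1 d θ Δ (n + 1) (fun A => (Yfun d θ Δ n j A - pst θ Δ 0) ^ 2)
        = ∑ B : LConf d n,
            ((Mmat θ Δ 0 0 * Sfun θ Δ n 0 B + Mmat θ Δ 0 1 * Sfun θ Δ n 1 B)
              * (post d θ Δ n 0 B - pst θ Δ 0) ^ 2) :=
          expect_child θ Δ hπ0ne (fun B => (post d θ Δ n 0 B - pst θ Δ 0) ^ 2) j
      _ = ∑ B : LConf d n,
            ((1 - θ) * (jointProb d θ Δ n 0 B * post d θ Δ n 0 B)
              - (2 * pst θ Δ 0 * (1 - θ)) * jointProb d θ Δ n 0 B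
              + ((1 - θ) * pst θ Δ 0 ^ 2) * levelProb d θ Δ n B
              + (θ / pst θ Δ 0)
                * (jointProb d θ Δ n 0 B * (post d θ Δ n 0 B - pst θ Δ 0) ^ 2)) := by
          refine Finset.sum_congr rfl fun B _ => ?_
          rw [hQ B]
          linear_combination (1 - θ) * (post d θ Δ n 0 B - 2 * pst θ Δ 0) * hLX B
      _ = (1 - θ)
            * (∑ B : LConf d n, jointProb d θ Δ n 0 B * post d θ Δ n 0 B)
            - (2 * pst θ Δ 0 * (1 - θ)) * (∑ B : LConf d n, jointProb d θ Δ n 0 B)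
            + ((1 - θ) * pst θ Δ 0 ^ 2) * (∑ B : LConf d n, levelProb d θ Δ n B)
            + (θ / pst θ Δ 0)
              * (∑ B : LConf d n,
                  jointProb d θ Δ n 0 B * (post d θ Δ n 0 B - pst θ Δ 0) ^ 2) := by
          simp only [Finset.sum_sub_distrib, Finset.sum_add_distrib, ← Finset.mul_sum]
      _ = θ * zseq d θ Δ n + pst θ Δ 0 * (1 - θ) * xseq d θ Δ n := by
          rw [hJX, hsumJ, hsumL, hJX2]
          field_simp
          ring

end AsymIsing
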